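/- Every evolutionary system possesses a weak global attractor A_w, and A_w = ω_w(X). -/

import Mathlib

open Set Filter Topology

/-- The topology induced by a metric structure `m` on `X`. -/
def mtop {X : Type*} (m : MetricSpace X) : TopologicalSpace X :=
  m.toPseudoMetricSpace.toUniformSpace.toTopologicalSpace

/-- An evolutionary system: for each `T : ℝ`, `E T` is the set of trajectories on `[T, ∞)`
(modeled as functions `ℝ → X`), with translation and restriction properties. -/
structure EvolSys (X : Type*) where
  E : ℝ → Set (ℝ → X)
  nonempty : (E 0).Nonempty
  translate : ∀ T s : ℝ, E (T + s) = {u | (fun t => u (t + s)) ∈ E T}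
  restrict : ∀ T T' : ℝ, T ≤ T' → E T ⊆ E T'

/-- Complete trajectories. -/
def EvolSys.Einf {X : Type*} (ES : EvolSys X) : Set (ℝ → X) := {u | ∀ T : ℝ, u ∈ ES.E T}

/-- `R t A = {u t : u 0 ∈ A, u ∈ E([0,∞))}`. -/
def EvolSys.R {X : Type*} (ES : EvolSys X) (t : ℝ) (A : Set X) : Set X :=
  {x | ∃ u ∈ ES.E 0, u 0 ∈ A ∧ u t = x}

/-- `R̃ t A = {u t : u 0 ∈ A, u ∈ E((-∞,∞))}`. -/
def EvolSys.Rt {X : Type*} (ES : EvolSys X) (t : ℝ) (A : Set X) : Set X :=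
  {x | ∃ u ∈ ES.Einf, u 0 ∈ A ∧ u t = x}

/-- The omega-limit of `A` with respect to the metric `m`. -/
def omegaLim {X : Type*} (m : MetricSpace X) (ES : EvolSys X) (A : Set X) : Set X :=
  ⋂ T ∈ Ici (0:ℝ), @closure X (mtop m) (⋃ t ∈ Ici T, ES.R t A)

/-- `P` uniformly attracts `A` in the metric `m`. -/
def attracts {X : Type*} (m : MetricSpace X) (ES : EvolSys X) (P A : Set X) : Prop :=
  ∀ ε > (0:ℝ), ∃ t₀ : ℝ, ∀ t ≥ t₀, ∀ x ∈ ES.R t A, ∃ p ∈ P, m.dist x p < ε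

/-- `P` is an attracting set in the metric `m`. -/
def isAttracting {X : Type*} (m : MetricSpace X) (ES : EvolSys X) (P : Set X) : Prop :=
  attracts m ES P univ

/-- A global attractor in metric `m`: a minimal closed attracting set. -/
def isGlobalAttractor {X : Type*} (m : MetricSpace X) (ES : EvolSys X) (A : Set X) : Prop :=
  @IsClosed X (mtop m) A ∧ isAttracting m ES A ∧
    ∀ B ⊆ A, @IsClosed X (mtop m) B → isAttracting m ES B → B = A

/-- Asymptotic compactness with respect to the strong metric `ms`. -/
def asympCompact {X : Type*} (ms : MetricSpace X) (ES : EvolSys X) : Prop :=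
  ∀ (t : ℕ → ℝ) (x : ℕ → X), Tendsto t atTop atTop →
    (∀ n, x n ∈ ES.R (t n) univ) →
    ∃ (φ : ℕ → ℕ) (y : X), StrictMono φ ∧
      Tendsto (fun n => ms.dist (x (φ n)) y) atTop (𝓝 0)

/-- Quasi-invariance of `A`: through every point of `A` passes a complete trajectory
lying in `A`. -/
def quasiInvariant {X : Type*} (ES : EvolSys X) (A : Set X) : Prop :=
  ∀ a ∈ A, ∃ u ∈ ES.Einf, u 0 = a ∧ ∀ t : ℝ, u t ∈ A

/-- Condition A1: `E([0,∞))` is (sequentially) compact in `C([0,∞); X_w)`, i.e. every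
sequence of trajectories has a subsequence converging, uniformly in `d_w` on every
compact subinterval of `[0,∞)`, to a trajectory. -/
def A1cond {X : Type*} (mw : MetricSpace X) (ES : EvolSys X) : Prop :=
  ∀ u : ℕ → ℝ → X, (∀ n, u n ∈ ES.E 0) →
    ∃ (φ : ℕ → ℕ) (v : ℝ → X), StrictMono φ ∧ v ∈ ES.E 0 ∧
      ∀ T > (0:ℝ), ∀ ε > (0:ℝ), ∃ N : ℕ, ∀ n ≥ N, ∀ s ∈ Icc (0:ℝ) T,
        mw.dist (u (φ n) s) (v s) < ε

/-- The metric of `C([a,∞); X_w)`. -/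
noncomputable def dC {X : Type*} (mw : MetricSpace X) (a : ℝ) (u v : ℝ → X) : ℝ :=
  ∑' T : ℕ, (1/2 : ℝ)^T *
    (sSup ((fun t => mw.dist (u t) (v t)) '' Icc a (a + T)) /
     (1 + sSup ((fun t => mw.dist (u t) (v t)) '' Icc a (a + T))))

theorem stmt8 {X : Type*} (mw : MetricSpace X) (ES : EvolSys X)
    (hXw : @IsCompact X (mtop mw) Set.univ) :
    isGlobalAttractor mw ES (omegaLim mw ES Set.univ) := by
  letI : MetricSpace X := mw
  refine ⟨isClosed_biInter fun T hT => isClosed_closure, ?_, ?_⟩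
  · -- attracting
    by_contra hcon
    simp only [isAttracting, attracts, not_forall, not_exists, not_lt] at hcon
    obtain ⟨ε, hε, h⟩ := hcon
    have h' : ∀ n : ℕ, ∃ t ≥ (n:ℝ), ∃ x ∈ ES.R t univ, ∀ p ∈ omegaLim mw ES univ,
        ε ≤ dist x p := by
      intro n
      obtain ⟨t, ht⟩ := h n
      push_neg at ht
      obtain ⟨htn, x, hx, hfar⟩ := ht
      exact ⟨t, htn, x, hx, hfar⟩
    choose t ht x hx hfar using h'
    obtain ⟨y, -, φ, hφ, hty⟩ := (show IsCompact (univ : Set X) from hXw).tendsto_subseq (fun n => mem_univ (x n))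
    have hyω : y ∈ omegaLim mw ES univ := by
      simp only [omegaLim, mem_iInter₂]
      intro T hT
      refine mem_closure_of_tendsto hty ?_
      filter_upwards [eventually_ge_atTop ⌈T⌉₊] with n hn
      refine mem_iUnion₂.2 ⟨t (φ n), ?_, hx (φ n)⟩
      have h1 : (φ n : ℝ) ≥ (n : ℝ) := by exact_mod_cast hφ.le_apply
      have h2 : (n : ℝ) ≥ T := le_trans (Nat.le_ceil T) (by exact_mod_cast hn)
      exact mem_Ici.2 (le_trans (le_trans h2 h1) (ht (φ n)))
    have hev : ∀ᶠ n in atTop, (x ∘ φ) n ∈ Metric.ball y ε :=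
      hty.eventually_mem (Metric.ball_mem_nhds y hε)
    obtain ⟨N, hN⟩ := hev.exists
    exact absurd (hfar (φ N) y hyω) (not_le.2 hN)
  · -- minimality
    intro B hB hBcl hBattr
    refine Subset.antisymm hB fun a ha => ?_
    rw [← hBcl.closure_eq]
    show a ∈ closure B
    rw [Metric.mem_closure_iff]
    intro ε hε
    obtain ⟨t₀, ht₀⟩ := hBattr (ε/2) (by linarith)
    have haT : a ∈ closure (⋃ t ∈ Ici (max t₀ 0), ES.R t univ) := by
      simp only [omegaLim, mem_iInter₂] at ha
      exact ha (max t₀ 0) (mem_Ici.2 (le_max_right _ _))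
    obtain ⟨x, hxmem, hax⟩ := Metric.mem_closure_iff.1 haT (ε/2) (by linarith)
    obtain ⟨s, hs, hxs⟩ := mem_iUnion₂.1 hxmem
    obtain ⟨p, hp, hxp⟩ := ht₀ s (le_trans (le_max_left _ _) hs) x hxs
    exact ⟨p, hp, by calc dist a p ≤ dist a x + dist x p := dist_triangle a x p
      _ < ε := by linarith⟩
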